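/- Let p = 8k - 1 be prime. Then the 3-element subsets of {1, ..., p+2} can be colored with p colors so that any two 3-element subsets whose intersection has exactly 2 elements receive different colors. -/
import Mathlib

open Finset

namespace ColoringAux

noncomputable section
open Classical

variable {p : ℕ} [Fact p.Prime]

/- ### Number-theoretic lemmas -/

lemma sq2 (h7 : p % 8 = 7) : IsSquare (2 : ZMod p) := by
  have : p ≠ 2 := by omega
  rw [ZMod.exists_sq_eq_two_iff this]; omega

lemma nsqneg (h7 : p % 8 = 7) : ¬ IsSquare (-1 : ZMod p) := by
  rw [ZMod.exists_sq_eq_neg_one_iff]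
  have := (Fact.out : p.Prime).two_le
  omega

lemma two_ne_zero'' (h7 : p % 8 = 7) : (2 : ZMod p) ≠ 0 := by
  have h : ((2:ℕ) : ZMod p) = 0 ↔ (p:ℕ) ∣ 2 := ZMod.natCast_eq_zero_iff 2 p
  intro h0
  have h2 : (p:ℕ) ∣ 2 := h.mp (by exact_mod_cast h0)
  have := Nat.le_of_dvd (by norm_num) h2
  omega

lemma neg_not_sq' (h7 : p % 8 = 7) {z : ZMod p} (hz : z ≠ 0) (h : IsSquare z) :
    ¬ IsSquare (-z) := by
  intro h2
  apply nsqneg h7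
  have : (-1 : ZMod p) = (-z) * z⁻¹ := by field_simp
  rw [this]
  exact h2.mul h.inv

lemma neg_sq' (h7 : p % 8 = 7) {z : ZMod p} (hz : z ≠ 0) (h : ¬ IsSquare z) :
    IsSquare (-z) := by
  have hz2 : (-z) ≠ 0 := neg_ne_zero.mpr hz
  have q1 : quadraticChar (ZMod p) z = -1 := quadraticChar_neg_one_iff_not_isSquare.mpr h
  have qm1 : quadraticChar (ZMod p) (-1) = -1 :=
    quadraticChar_neg_one_iff_not_isSquare.mpr (nsqneg h7)
  have hq : quadraticChar (ZMod p) (-z) = 1 := by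
    have e : (-z : ZMod p) = (-1) * z := by ring
    rw [e, map_mul, qm1, q1]; ring
  exact (quadraticChar_one_iff_isSquare hz2).mp hq

lemma double_sq (h7 : p % 8 = 7) {u : ZMod p} (h : IsSquare u) : IsSquare (2 * u) :=
  (sq2 h7).mul h

lemma half_sq (h7 : p % 8 = 7) {u : ZMod p} (h : IsSquare (2 * u)) : IsSquare u := by
  have h2 : (2 : ZMod p) ≠ 0 := two_ne_zero'' h7
  have e : u = 2⁻¹ * (2 * u) := by field_simp
  rw [e]
  exact ((sq2 h7).inv).mul h

/- ### The selector on pairs -/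

/-- selector: for `x ≠ y`, equals `x` if `x - y` is a square, else `y`. -/
def s2 (x y : ZMod p) : ZMod p :=
  (if IsSquare (x - y) then x else 0) + (if IsSquare (y - x) then y else 0)

lemma s2_comm (x y : ZMod p) : s2 x y = s2 y x := by
  unfold s2; ring

lemma s2_cases (h7 : p % 8 = 7) {x y : ZMod p} (h : x ≠ y) :
    (IsSquare (x - y) ∧ ¬ IsSquare (y - x) ∧ s2 x y = x) ∨
    (¬ IsSquare (x - y) ∧ IsSquare (y - x) ∧ s2 x y = y) := by
  have hxy : x - y ≠ 0 := sub_ne_zero.mpr h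
  by_cases hs : IsSquare (x - y)
  · have hn : ¬ IsSquare (y - x) := by
      have := neg_not_sq' h7 hxy hs
      rwa [neg_sub] at this
    left
    refine ⟨hs, hn, ?_⟩
    unfold s2
    rw [if_pos hs, if_neg hn, add_zero]
  · have hn : IsSquare (y - x) := by
      have := neg_sq' h7 hxy hs
      rwa [neg_sub] at this
    right
    refine ⟨hs, hn, ?_⟩
    unfold s2
    rw [if_neg hs, if_pos hn, zero_add]

/- ### Inequality lemmas over ZMod p -/

section Ineq
variable (h7 : p % 8 = 7)
include h7

lemma cancel2 {a b : ZMod p} (h : 2 * a = 2 * b) : a = b :=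
  mul_left_cancel₀ (two_ne_zero'' h7) h

/-- pure vs inf1-triple -/
lemma ineq_pure_I1 {α u v : ZMod p} (hau : α ≠ u) (hav : α ≠ v) (huv : u ≠ v) :
    α + u + v ≠ u + v + s2 u v := by
  rcases s2_cases h7 huv with ⟨_, _, hs⟩ | ⟨_, _, hs⟩ <;> rw [hs] <;> intro h
  · exact hau (by linear_combination h)
  · exact hav (by linear_combination h)

/-- pure vs inf2-triple -/
lemma ineq_pure_I2 {α u v : ZMod p} (hau : α ≠ u) (hav : α ≠ v) (huv : u ≠ v) :
    α + u + v ≠ 2 * (u + v) - s2 u v := by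
  rcases s2_cases h7 huv with ⟨_, _, hs⟩ | ⟨_, _, hs⟩ <;> rw [hs] <;> intro h
  · exact hav (by linear_combination h)
  · exact hau (by linear_combination h)

/-- inf1-triple vs inf2-triple on the same pair -/
lemma ineq_I1_I2 {u v : ZMod p} (huv : u ≠ v) :
    u + v + s2 u v ≠ 2 * (u + v) - s2 u v := by
  rcases s2_cases h7 huv with ⟨_, _, hs⟩ | ⟨_, _, hs⟩ <;> rw [hs] <;> intro h
  · exact huv (by linear_combination h)
  · exact huv (by linear_combination -h)

/-- tournament lemma for inf1 -/
lemma ineq_I1_I1 {α β v : ZMod p} (hab : α ≠ β) (hav : α ≠ v) (hbv : β ≠ v) :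
    α + v + s2 α v ≠ β + v + s2 β v := by
  rcases s2_cases h7 hav with ⟨ha1, ha2, hsa⟩ | ⟨ha1, ha2, hsa⟩ <;>
    rcases s2_cases h7 hbv with ⟨hb1, hb2, hsb⟩ | ⟨hb1, hb2, hsb⟩ <;>
      rw [hsa, hsb] <;> intro h
  · exact hab (cancel2 h7 (by linear_combination h))
  · -- s2 α v = α (α - v sq), s2 β v = v (β - v not sq) : 2α + v = β + 2v → β - v = 2(α-v)
    exact hb1 (by
      have e : β - v = 2 * (α - v) := by linear_combination -h
      rw [e]; exact double_sq h7 ha1)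
  · exact ha1 (by
      have e : α - v = 2 * (β - v) := by linear_combination h
      rw [e]; exact double_sq h7 hb1)
  · exact hab (by linear_combination h)

/-- tournament lemma for inf2 -/
lemma ineq_I2_I2 {α β v : ZMod p} (hab : α ≠ β) (hav : α ≠ v) (hbv : β ≠ v) :
    2 * (α + v) - s2 α v ≠ 2 * (β + v) - s2 β v := by
  rcases s2_cases h7 hav with ⟨ha1, ha2, hsa⟩ | ⟨ha1, ha2, hsa⟩ <;>
    rcases s2_cases h7 hbv with ⟨hb1, hb2, hsb⟩ | ⟨hb1, hb2, hsb⟩ <;>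
      rw [hsa, hsb] <;> intro h
  · exact hab (by linear_combination h)
  · -- α + 2v = 2β + v → α - v = 2(β - v) ; α - v sq, β - v not sq
    exact hb1 (half_sq h7 (u := β - v) (by
      have e : 2 * (β - v) = α - v := by linear_combination -h
      rw [e]; exact ha1))
  · exact ha1 (half_sq h7 (u := α - v) (by
      have e : 2 * (α - v) = β - v := by linear_combination h
      rw [e]; exact hb1))
  · exact hab (cancel2 h7 (by linear_combination h))

/-- inf1-triple vs both-infs triple (sharing inf1 and v) -/
lemma ineq_I1_B {α v : ZMod p} (hav : α ≠ v) :
    α + v + s2 α v ≠ 3 * v := by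
  rcases s2_cases h7 hav with ⟨_, _, hs⟩ | ⟨_, _, hs⟩ <;> rw [hs] <;> intro h
  · exact hav (cancel2 h7 (by linear_combination h))
  · exact hav (by linear_combination h)

/-- inf2-triple vs both-infs triple -/
lemma ineq_I2_B {α v : ZMod p} (hav : α ≠ v) :
    2 * (α + v) - s2 α v ≠ 3 * v := by
  rcases s2_cases h7 hav with ⟨_, _, hs⟩ | ⟨_, _, hs⟩ <;> rw [hs] <;> intro h
  · exact hav (by linear_combination h)
  · exact hav (cancel2 h7 (by linear_combination h))

lemma ineq_B_B (h3 : 3 < p) {α β : ZMod p} (hab : α ≠ β) : 3 * α ≠ 3 * β := by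
  have h30 : (3 : ZMod p) ≠ 0 := by
    have hd : ((3:ℕ) : ZMod p) = 0 ↔ (p:ℕ) ∣ 3 := ZMod.natCast_eq_zero_iff 3 p
    intro h0
    have h2 : (p:ℕ) ∣ 3 := hd.mp (by exact_mod_cast h0)
    have := Nat.le_of_dvd (by norm_num) h2
    omega
  intro h
  have h3' := mul_left_cancel₀ h30 h
  exact hab h3'

end Ineq

/- ### The coloring -/

def ff (p : ℕ) (i : Fin (p+2)) : ZMod p := if i.val < p then (i.val : ZMod p) else 0

def bb (p : ℕ) (T : Finset (Fin (p+2))) : ZMod p := ∑ a ∈ T, ff p a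

def ss (p : ℕ) (T : Finset (Fin (p+2))) : ZMod p :=
  ∑ a ∈ T, if a.val < p ∧ IsSquare (2 * ff p a - bb p T) then ff p a else 0

def inf1 (p : ℕ) : Fin (p+2) := ⟨p, by omega⟩
def inf2 (p : ℕ) : Fin (p+2) := ⟨p+1, by omega⟩

def c0 (p : ℕ) (T : Finset (Fin (p+2))) : ZMod p :=
  bb p T +
    (if inf1 p ∈ T then (if inf2 p ∈ T then 2 * bb p T else ss p T)
     else (if inf2 p ∈ T then bb p T - ss p T else 0))


/- ### Evaluating the coloring on explicit triples -/

section Compute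
variable {p : ℕ} [Fact p.Prime]

lemma inf1_val : (inf1 p).val = p := rfl
lemma inf2_val : (inf2 p).val = p + 1 := rfl

lemma ord_ne_inf1 {i : Fin (p+2)} (h : i.val < p) : i ≠ inf1 p := by
  intro h'; rw [h'] at h; simp [inf1_val] at h

lemma ord_ne_inf2 {i : Fin (p+2)} (h : i.val < p) : i ≠ inf2 p := by
  intro h'; rw [h'] at h; simp [inf2_val] at h

lemma inf1_ne_inf2 : (inf1 p) ≠ inf2 p := by
  intro h
  have := congrArg Fin.val h
  simp [inf1_val, inf2_val] at this

lemma ff_ord {i : Fin (p+2)} (h : i.val < p) : ff p i = (i.val : ZMod p) := by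
  simp [ff, h]

lemma ff_inf1 : ff p (inf1 p) = 0 := by simp [ff, inf1_val]
lemma ff_inf2 : ff p (inf2 p) = 0 := by simp [ff, inf2_val]

lemma ff_inj {i j : Fin (p+2)} (hi : i.val < p) (hj : j.val < p) (hij : i ≠ j) :
    ff p i ≠ ff p j := by
  rw [ff_ord hi, ff_ord hj]
  intro h
  have h2 : ((i.val : ZMod p)).val = ((j.val : ZMod p)).val := by rw [h]
  rw [ZMod.val_cast_of_lt hi, ZMod.val_cast_of_lt hj] at h2
  exact hij (Fin.ext h2)

lemma bb_triple (a u v : Fin (p+2)) (h1 : a ≠ u) (h2 : a ≠ v) (h3 : u ≠ v) :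
    bb p {a, u, v} = ff p a + ff p u + ff p v := by
  rw [bb, Finset.sum_insert (by simp [h1, h2]), Finset.sum_insert (by simp [h3]),
    Finset.sum_singleton, add_assoc]

lemma ss_triple (a u v : Fin (p+2)) (h1 : a ≠ u) (h2 : a ≠ v) (h3 : u ≠ v) :
    ss p {a, u, v} =
      (if a.val < p ∧ IsSquare (2 * ff p a - bb p {a,u,v}) then ff p a else 0) +
      (if u.val < p ∧ IsSquare (2 * ff p u - bb p {a,u,v}) then ff p u else 0) +
      (if v.val < p ∧ IsSquare (2 * ff p v - bb p {a,u,v}) then ff p v else 0) := by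
  rw [ss, Finset.sum_insert (by simp [h1, h2]), Finset.sum_insert (by simp [h3]),
    Finset.sum_singleton, add_assoc]
  split_ifs <;> rfl

lemma mem_triple_iff (t a u v : Fin (p+2)) :
    t ∈ ({a, u, v} : Finset (Fin (p+2))) ↔ t = a ∨ t = u ∨ t = v := by
  simp [Finset.mem_insert]

lemma c0_pure (a u v : Fin (p+2)) (ha : a.val < p) (hu : u.val < p) (hv : v.val < p)
    (h1 : a ≠ u) (h2 : a ≠ v) (h3 : u ≠ v) :
    c0 p {a, u, v} = ff p a + ff p u + ff p v := by
  have m1 : inf1 p ∉ ({a, u, v} : Finset (Fin (p+2))) := by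
    rw [mem_triple_iff]
    push_neg
    exact ⟨(ord_ne_inf1 ha).symm, (ord_ne_inf1 hu).symm, (ord_ne_inf1 hv).symm⟩
  have m2 : inf2 p ∉ ({a, u, v} : Finset (Fin (p+2))) := by
    rw [mem_triple_iff]
    push_neg
    exact ⟨(ord_ne_inf2 ha).symm, (ord_ne_inf2 hu).symm, (ord_ne_inf2 hv).symm⟩
  rw [c0, if_neg m1, if_neg m2, add_zero, bb_triple a u v h1 h2 h3]

lemma c0_I1 (u v : Fin (p+2)) (hu : u.val < p) (hv : v.val < p) (h3 : u ≠ v) :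
    c0 p {inf1 p, u, v} = ff p u + ff p v + s2 (ff p u) (ff p v) := by
  have h1 : inf1 p ≠ u := (ord_ne_inf1 hu).symm
  have h2 : inf1 p ≠ v := (ord_ne_inf1 hv).symm
  have m1 : inf1 p ∈ ({inf1 p, u, v} : Finset (Fin (p+2))) := by simp
  have m2 : inf2 p ∉ ({inf1 p, u, v} : Finset (Fin (p+2))) := by
    rw [mem_triple_iff]
    push_neg
    exact ⟨inf1_ne_inf2.symm, (ord_ne_inf2 hu).symm, (ord_ne_inf2 hv).symm⟩
  have hbb : bb p {inf1 p, u, v} = ff p u + ff p v := by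
    rw [bb_triple _ _ _ h1 h2 h3, ff_inf1, zero_add]
  rw [c0, if_pos m1, if_neg m2, hbb, ss_triple _ _ _ h1 h2 h3, hbb]
  have e1 : ¬ ((inf1 p).val < p ∧ IsSquare (2 * ff p (inf1 p) - (ff p u + ff p v))) := by
    rw [inf1_val]; simp
  have e2 : (u.val < p ∧ IsSquare (2 * ff p u - (ff p u + ff p v))) ↔
      IsSquare (ff p u - ff p v) := by
    have : 2 * ff p u - (ff p u + ff p v) = ff p u - ff p v := by ring
    rw [this]
    exact ⟨fun h => h.2, fun h => ⟨hu, h⟩⟩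
  have e3 : (v.val < p ∧ IsSquare (2 * ff p v - (ff p u + ff p v))) ↔
      IsSquare (ff p v - ff p u) := by
    have : 2 * ff p v - (ff p u + ff p v) = ff p v - ff p u := by ring
    rw [this]
    exact ⟨fun h => h.2, fun h => ⟨hv, h⟩⟩
  rw [if_neg e1, if_congr e2 rfl rfl, if_congr e3 rfl rfl, zero_add, s2]

lemma c0_I2 (u v : Fin (p+2)) (hu : u.val < p) (hv : v.val < p) (h3 : u ≠ v) :
    c0 p {inf2 p, u, v} = 2 * (ff p u + ff p v) - s2 (ff p u) (ff p v) := by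
  have h1 : inf2 p ≠ u := (ord_ne_inf2 hu).symm
  have h2 : inf2 p ≠ v := (ord_ne_inf2 hv).symm
  have m1 : inf1 p ∉ ({inf2 p, u, v} : Finset (Fin (p+2))) := by
    rw [mem_triple_iff]
    push_neg
    exact ⟨inf1_ne_inf2, (ord_ne_inf1 hu).symm, (ord_ne_inf1 hv).symm⟩
  have m2 : inf2 p ∈ ({inf2 p, u, v} : Finset (Fin (p+2))) := by simp
  have hbb : bb p {inf2 p, u, v} = ff p u + ff p v := by
    rw [bb_triple _ _ _ h1 h2 h3, ff_inf2, zero_add]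
  rw [c0, if_neg m1, if_pos m2, hbb, ss_triple _ _ _ h1 h2 h3, hbb]
  have e1 : ¬ ((inf2 p).val < p ∧ IsSquare (2 * ff p (inf2 p) - (ff p u + ff p v))) := by
    rw [inf2_val]; simp
  have e2 : (u.val < p ∧ IsSquare (2 * ff p u - (ff p u + ff p v))) ↔
      IsSquare (ff p u - ff p v) := by
    have : 2 * ff p u - (ff p u + ff p v) = ff p u - ff p v := by ring
    rw [this]
    exact ⟨fun h => h.2, fun h => ⟨hu, h⟩⟩
  have e3 : (v.val < p ∧ IsSquare (2 * ff p v - (ff p u + ff p v))) ↔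
      IsSquare (ff p v - ff p u) := by
    have : 2 * ff p v - (ff p u + ff p v) = ff p v - ff p u := by ring
    rw [this]
    exact ⟨fun h => h.2, fun h => ⟨hv, h⟩⟩
  rw [if_neg e1, if_congr e2 rfl rfl, if_congr e3 rfl rfl, zero_add, s2]
  ring

lemma c0_B (u : Fin (p+2)) (hu : u.val < p) :
    c0 p {inf1 p, inf2 p, u} = 3 * ff p u := by
  have h1 : inf1 p ≠ inf2 p := inf1_ne_inf2
  have h2 : inf1 p ≠ u := (ord_ne_inf1 hu).symm
  have h3 : inf2 p ≠ u := (ord_ne_inf2 hu).symm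
  have m1 : inf1 p ∈ ({inf1 p, inf2 p, u} : Finset (Fin (p+2))) := by simp
  have m2 : inf2 p ∈ ({inf1 p, inf2 p, u} : Finset (Fin (p+2))) := by simp
  have hbb : bb p {inf1 p, inf2 p, u} = ff p u := by
    rw [bb_triple _ _ _ h1 h2 h3, ff_inf1, ff_inf2, zero_add, zero_add]
  rw [c0, if_pos m1, if_pos m2, hbb]
  ring

/- set permutation lemmas -/
lemma perm1 (a u v : Fin (p+2)) : ({a, u, v} : Finset (Fin (p+2))) = {u, a, v} := by
  ext t; simp [mem_triple_iff]; tauto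

lemma perm2 (a u v : Fin (p+2)) : ({a, u, v} : Finset (Fin (p+2))) = {v, a, u} := by
  ext t; simp [mem_triple_iff]; tauto

lemma perm3 (a u v : Fin (p+2)) : ({a, u, v} : Finset (Fin (p+2))) = {u, v, a} := by
  ext t; simp [mem_triple_iff]; tauto

lemma perm4 (a u v : Fin (p+2)) : ({a, u, v} : Finset (Fin (p+2))) = {v, u, a} := by
  ext t; simp [mem_triple_iff]; tauto

/- ### The key lemma -/

lemma tri (i : Fin (p+2)) : i.val < p ∨ i = inf1 p ∨ i = inf2 p := by
  have := i.isLt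
  rcases Nat.lt_trichotomy i.val p with h | h | h
  · exact Or.inl h
  · exact Or.inr (Or.inl (Fin.ext h))
  · right; right
    apply Fin.ext
    rw [inf2_val]
    omega

lemma key (h7 : p % 8 = 7) (hlt : 3 < p) (a b u v : Fin (p+2))
    (hab : a ≠ b) (hau : a ≠ u) (hav : a ≠ v) (hbu : b ≠ u) (hbv : b ≠ v) (huv : u ≠ v) :
    c0 p {a, u, v} ≠ c0 p {b, u, v} := by
  rcases tri u with hu | hu | hu <;> rcases tri v with hv | hv | hv
  · -- u, v ordinary
    rcases tri a with ha | ha | ha <;> rcases tri b with hb | hb | hb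
    · rw [c0_pure a u v ha hu hv hau hav huv, c0_pure b u v hb hu hv hbu hbv huv]
      have := ff_inj ha hb hab
      intro h
      exact this (by linear_combination h)
    · subst hb
      rw [c0_pure a u v ha hu hv hau hav huv, c0_I1 u v hu hv huv]
      exact ineq_pure_I1 h7 (ff_inj ha hu hau) (ff_inj ha hv hav) (ff_inj hu hv huv)
    · subst hb
      rw [c0_pure a u v ha hu hv hau hav huv, c0_I2 u v hu hv huv]
      exact ineq_pure_I2 h7 (ff_inj ha hu hau) (ff_inj ha hv hav) (ff_inj hu hv huv)
    · subst ha
      rw [c0_pure b u v hb hu hv hbu hbv huv, c0_I1 u v hu hv huv]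
      exact (ineq_pure_I1 h7 (ff_inj hb hu hbu) (ff_inj hb hv hbv) (ff_inj hu hv huv)).symm
    · subst ha; exact absurd hb.symm hab
    · subst ha; subst hb
      rw [c0_I1 u v hu hv huv, c0_I2 u v hu hv huv]
      exact ineq_I1_I2 h7 (ff_inj hu hv huv)
    · subst ha
      rw [c0_pure b u v hb hu hv hbu hbv huv, c0_I2 u v hu hv huv]
      exact (ineq_pure_I2 h7 (ff_inj hb hu hbu) (ff_inj hb hv hbv) (ff_inj hu hv huv)).symm
    · subst ha; subst hb
      rw [c0_I1 u v hu hv huv, c0_I2 u v hu hv huv]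
      exact (ineq_I1_I2 h7 (ff_inj hu hv huv)).symm
    · subst ha; exact absurd hb.symm hab
  · -- u ordinary, v = inf1
    subst hv
    rw [perm2 a u (inf1 p), perm2 b u (inf1 p)]
    rcases tri a with ha | ha | ha
    · rcases tri b with hb | hb | hb
      · rw [c0_I1 a u ha hu hau, c0_I1 b u hb hu hbu]
        exact ineq_I1_I1 h7 (ff_inj ha hb hab) (ff_inj ha hu hau) (ff_inj hb hu hbu)
      · exact absurd hb hbv
      · subst hb
        rw [c0_I1 a u ha hu hau, c0_B u hu]
        exact ineq_I1_B h7 (ff_inj ha hu hau)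
    · exact absurd ha hav
    · subst ha
      rcases tri b with hb | hb | hb
      · rw [c0_I1 b u hb hu hbu, c0_B u hu]
        exact (ineq_I1_B h7 (ff_inj hb hu hbu)).symm
      · exact absurd hb hbv
      · exact absurd hb.symm hab
  · -- u ordinary, v = inf2
    subst hv
    rw [perm2 a u (inf2 p), perm2 b u (inf2 p)]
    rcases tri a with ha | ha | ha
    · rcases tri b with hb | hb | hb
      · rw [c0_I2 a u ha hu hau, c0_I2 b u hb hu hbu]
        exact ineq_I2_I2 h7 (ff_inj ha hb hab) (ff_inj ha hu hau) (ff_inj hb hu hbu)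
      · subst hb
        rw [c0_I2 a u ha hu hau, perm1 (inf2 p) (inf1 p) u, c0_B u hu]
        exact ineq_I2_B h7 (ff_inj ha hu hau)
      · exact absurd hb hbv
    · subst ha
      rcases tri b with hb | hb | hb
      · rw [c0_I2 b u hb hu hbu, perm1 (inf2 p) (inf1 p) u, c0_B u hu]
        exact (ineq_I2_B h7 (ff_inj hb hu hbu)).symm
      · exact absurd hb.symm hab
      · exact absurd hb hbv
    · exact absurd ha hav
  · -- u = inf1, v ordinary
    subst hu
    rw [perm1 a (inf1 p) v, perm1 b (inf1 p) v]
    rcases tri a with ha | ha | ha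
    · rcases tri b with hb | hb | hb
      · rw [c0_I1 a v ha hv hav, c0_I1 b v hb hv hbv]
        exact ineq_I1_I1 h7 (ff_inj ha hb hab) (ff_inj ha hv hav) (ff_inj hb hv hbv)
      · exact absurd hb hbu
      · subst hb
        rw [c0_I1 a v ha hv hav, c0_B v hv]
        exact ineq_I1_B h7 (ff_inj ha hv hav)
    · exact absurd ha hau
    · subst ha
      rcases tri b with hb | hb | hb
      · rw [c0_I1 b v hb hv hbv, c0_B v hv]
        exact (ineq_I1_B h7 (ff_inj hb hv hbv)).symm
      · exact absurd hb hbu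
      · exact absurd hb.symm hab
  · exact absurd (hu.trans hv.symm) huv
  · -- u = inf1, v = inf2 : both-infs triples
    subst hu; subst hv
    rw [perm3 a (inf1 p) (inf2 p), perm3 b (inf1 p) (inf2 p)]
    rcases tri a with ha | ha | ha
    · rcases tri b with hb | hb | hb
      · rw [c0_B a ha, c0_B b hb]
        exact ineq_B_B h7 hlt (ff_inj ha hb hab)
      · exact absurd hb hbu
      · exact absurd hb hbv
    · exact absurd ha hau
    · exact absurd ha hav
  · -- u = inf2, v ordinary
    subst hu
    rw [perm1 a (inf2 p) v, perm1 b (inf2 p) v]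
    rcases tri a with ha | ha | ha
    · rcases tri b with hb | hb | hb
      · rw [c0_I2 a v ha hv hav, c0_I2 b v hb hv hbv]
        exact ineq_I2_I2 h7 (ff_inj ha hb hab) (ff_inj ha hv hav) (ff_inj hb hv hbv)
      · subst hb
        rw [c0_I2 a v ha hv hav, perm1 (inf2 p) (inf1 p) v, c0_B v hv]
        exact ineq_I2_B h7 (ff_inj ha hv hav)
      · exact absurd hb hbu
    · subst ha
      rcases tri b with hb | hb | hb
      · rw [c0_I2 b v hb hv hbv, perm1 (inf2 p) (inf1 p) v, c0_B v hv]
        exact (ineq_I2_B h7 (ff_inj hb hv hbv)).symm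
      · exact absurd hb.symm hab
      · exact absurd hb hbu
    · exact absurd ha hau
  · -- u = inf2, v = inf1
    subst hu; subst hv
    rw [perm4 a (inf2 p) (inf1 p), perm4 b (inf2 p) (inf1 p)]
    rcases tri a with ha | ha | ha
    · rcases tri b with hb | hb | hb
      · rw [c0_B a ha, c0_B b hb]
        exact ineq_B_B h7 hlt (ff_inj ha hb hab)
      · exact absurd hb hbv
      · exact absurd hb hbu
    · exact absurd ha hav
    · exact absurd ha hau
  · exact absurd (hu.trans hv.symm) huv

end Compute

end

end ColoringAux

theorem coloring_exists (k p : ℕ) (hk : 0 < k) (hp8 : p = 8 * k - 1) (hp : p.Prime) :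
    ∃ c : Finset (Fin (p + 2)) → Fin p,
      ∀ x y : Finset (Fin (p + 2)), x.card = 3 → y.card = 3 →
        (x ∩ y).card = 2 → c x ≠ c y := by
  haveI : Fact p.Prime := ⟨hp⟩
  haveI : NeZero p := ⟨hp.pos.ne'⟩
  have h7 : p % 8 = 7 := by omega
  have hlt : 3 < p := by omega
  refine ⟨fun T => ⟨(ColoringAux.c0 p T).val, ZMod.val_lt _⟩, ?_⟩
  intro x y hx hy hxy
  -- decompose x and y
  obtain ⟨u, v, huv, hs⟩ := Finset.card_eq_two.mp hxy
  have hxd : (x \ y).card = 1 := by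
    have h := Finset.card_inter_add_card_sdiff x y
    omega
  have hyd : (y \ x).card = 1 := by
    have h := Finset.card_inter_add_card_sdiff y x
    rw [Finset.inter_comm] at h
    omega
  obtain ⟨a, ha⟩ := Finset.card_eq_one.mp hxd
  obtain ⟨b, hb⟩ := Finset.card_eq_one.mp hyd
  have hax : x = {a, u, v} := by
    have h1 : x \ y ∪ x ∩ y = x := Finset.sdiff_union_inter x y
    rw [ha, hs] at h1
    rw [← h1]
    rfl
  have hby : y = {b, u, v} := by
    have h1 : y \ x ∪ y ∩ x = y := Finset.sdiff_union_inter y x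
    rw [hb, Finset.inter_comm, hs] at h1
    rw [← h1]
    rfl
  have hany : a ∉ y := by
    have : a ∈ x \ y := by rw [ha]; exact Finset.mem_singleton_self a
    exact (Finset.mem_sdiff.mp this).2
  have hbnx : b ∉ x := by
    have : b ∈ y \ x := by rw [hb]; exact Finset.mem_singleton_self b
    exact (Finset.mem_sdiff.mp this).2
  have hu_mem : u ∈ x ∩ y := by rw [hs]; simp
  have hv_mem : v ∈ x ∩ y := by rw [hs]; simp
  have hab : a ≠ b := by
    intro h
    exact hany (h ▸ (Finset.mem_sdiff.mp (by rw [hb]; exact Finset.mem_singleton_self b)).1)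
  have hau : a ≠ u := fun h => hany (h ▸ (Finset.mem_inter.mp hu_mem).2)
  have hav : a ≠ v := fun h => hany (h ▸ (Finset.mem_inter.mp hv_mem).2)
  have hbu : b ≠ u := fun h => hbnx (h ▸ (Finset.mem_inter.mp hu_mem).1)
  have hbv : b ≠ v := fun h => hbnx (h ▸ (Finset.mem_inter.mp hv_mem).1)
  have hkey := ColoringAux.key h7 hlt a b u v hab hau hav hbu hbv huv
  rw [← hax, ← hby] at hkey
  intro hc
  apply hkey
  have := congrArg Fin.val hc
  simp only at this
  exact ZMod.val_injective p this
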